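/- Let 𝒫 be a finite set of integer pairs p = (p₁,p₂) with 0 ≤ p₁ ≤ p₂ and p₂ ≠ 0, and let {A_p}_{p∈𝒫} be real numbers with 8 Σ_{p∈𝒫} c_p A_p = 1 and Σ_{p∈𝒫} (p₁²+p₂²) c_p A_p ≠ 0; set M_𝒫 = (1/2)(Σ_{p∈𝒫} (p₁²+p₂²) c_p A_p)⁻¹. Let Ω ⊆ ℝ² be open, let f be continuously differentiable on Ω, and let x ∈ Ω. Then |∇f(x)|² = (1/2) M_𝒫 · lim_{l→0⁺} (1/l²) Σ_{p∈𝒫} A_p Σ_{D(x',l) ∼_p D(x,l)} ( I(f,x',l) − I(f,x,l) )². -/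

import Mathlib

set_option maxHeartbeats 1000000


open MeasureTheory Real Filter Topology

noncomputable section

/-- The `l`-square centered at `x`. -/
def Dsq (x : ℝ × ℝ) (l : ℝ) : Set (ℝ × ℝ) :=
  Set.Icc (x.1 - l / 2) (x.1 + l / 2) ×ˢ Set.Icc (x.2 - l / 2) (x.2 + l / 2)

/-- `I(f,x,l)`: the average of `f` over the `l`-square centered at `x`. -/
def Iavg (f : ℝ × ℝ → ℝ) (x : ℝ × ℝ) (l : ℝ) : ℝ :=
  (1 / l ^ 2) * ∫ ξ in Dsq x l, f ξ

/-- `D(x',l)` is a `p`-neighbor of `D(x,l)`. -/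
def isNbr (p : ℤ × ℤ) (l : ℝ) (x x' : ℝ × ℝ) : Prop :=
  (|x'.1 - x.1| = (p.1 : ℝ) * l ∧ |x'.2 - x.2| = (p.2 : ℝ) * l) ∨
    (|x'.1 - x.1| = (p.2 : ℝ) * l ∧ |x'.2 - x.2| = (p.1 : ℝ) * l)

/-- `I_p(f,x,l)`: sum of averages over all `p`-neighbors of `D(x,l)`. -/
def Ipavg (f : ℝ × ℝ → ℝ) (p : ℤ × ℤ) (x : ℝ × ℝ) (l : ℝ) : ℝ :=
  ∑ᶠ x' ∈ {x' : ℝ × ℝ | isNbr p l x x'}, Iavg f x' l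

/-- The constant `c_p` (for integer pairs with `0 ≤ p₁ ≤ p₂`). -/
def cP (p : ℤ × ℤ) : ℝ :=
  if p.1 = 0 ∧ p.2 = 0 then 1 / 8 else if p.1 = 0 ∨ p.1 = p.2 then 1 / 2 else 1

/-- The constant `T_p^(k)`. -/
def Tc (p : ℤ × ℤ) (k : ℕ) : ℝ :=
  2 * cP p *
    (((2 * (p.1 : ℂ) + 1) + (2 * (p.2 : ℂ) + 1) * Complex.I) ^ (4 * k + 2)
      - ((2 * (p.1 : ℂ) - 1) + (2 * (p.2 : ℂ) + 1) * Complex.I) ^ (4 * k + 2)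
      + ((2 * (p.1 : ℂ) - 1) + (2 * (p.2 : ℂ) - 1) * Complex.I) ^ (4 * k + 2)
      - ((2 * (p.1 : ℂ) + 1) + (2 * (p.2 : ℂ) - 1) * Complex.I) ^ (4 * k + 2)).im

/-- The polynomial harmonic function `f_n^x`. -/
def fP (x : ℝ × ℝ) (n : ℕ) (ξ : ℝ × ℝ) : ℝ :=
  ∑ j ∈ Finset.range (n / 2 + 1),
    (-1 : ℝ) ^ j * (ξ.1 - x.1) ^ (n - 2 * j) * (ξ.2 - x.2) ^ (2 * j) /
      (((n - 2 * j).factorial : ℝ) * ((2 * j).factorial : ℝ))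

/-- The polynomial harmonic function `g_n^x`. -/
def gP (x : ℝ × ℝ) (n : ℕ) (ξ : ℝ × ℝ) : ℝ :=
  ∑ j ∈ Finset.range ((n - 1) / 2 + 1),
    (-1 : ℝ) ^ j * (ξ.1 - x.1) ^ (n - 2 * j - 1) * (ξ.2 - x.2) ^ (2 * j + 1) /
      (((n - 2 * j - 1).factorial : ℝ) * ((2 * j + 1).factorial : ℝ))

/-- Partial derivative in the first coordinate. -/
def pd1 (f : ℝ × ℝ → ℝ) (y : ℝ × ℝ) : ℝ := fderiv ℝ f y (1, 0)

/-- Partial derivative in the second coordinate. -/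
def pd2 (f : ℝ × ℝ → ℝ) (y : ℝ × ℝ) : ℝ := fderiv ℝ f y (0, 1)

/-- `h` is harmonic on the open set `Ω`. -/
def HarmonicOn (h : ℝ × ℝ → ℝ) (Ω : Set (ℝ × ℝ)) : Prop :=
  ContDiffOn ℝ 2 h Ω ∧ ∀ y ∈ Ω, pd1 (pd1 h) y + pd2 (pd2 h) y = 0

/-- `‖𝒫‖ = max_{p ∈ 𝒫} ‖2p+(1,1)‖`. -/
def PNorm (P : Finset (ℤ × ℤ)) : ℝ :=
  sSup ((fun p : ℤ × ℤ =>
    Real.sqrt ((2 * (p.1 : ℝ) + 1) ^ 2 + (2 * (p.2 : ℝ) + 1) ^ 2)) '' ↑P)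

/-- The four corners of the unit square. -/
def qv : Fin 4 → ℝ × ℝ := ![(0, 0), (1, 0), (1, 1), (0, 1)]

/-- The contraction `F_i(x) = (x + q_i)/2`. -/
def Fc (i : Fin 4) (x : ℝ × ℝ) : ℝ × ℝ := ((x.1 + (qv i).1) / 2, (x.2 + (qv i).2) / 2)

/-- `F_w = F_{w₁} ∘ ⋯ ∘ F_{w_m}` for a word `w` of length `m`. -/
def Fword {m : ℕ} (w : Fin m → Fin 4) : ℝ × ℝ → ℝ × ℝ :=
  (List.ofFn w).foldr (fun i acc => Fc i ∘ acc) id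

/-- The center of the `m`-cell `F_w S`. -/
def cellCtr {m : ℕ} (w : Fin m → Fin 4) : ℝ × ℝ := Fword w (1 / 2, 1 / 2)

/-- `B_w(f)`: the average of `f` over the `m`-cell `F_w S` (a dyadic square of
side length `2⁻ᵐ` centered at `cellCtr w`). -/
def Bav (f : ℝ × ℝ → ℝ) {m : ℕ} (w : Fin m → Fin 4) : ℝ :=
  Iavg f (cellCtr w) ((1 / 2) ^ m)

/-! ### Auxiliary machinery for `stmt13` -/

private def VpZ (p : ℤ × ℤ) : Finset (ℤ × ℤ) :=
  {(p.1, p.2), (p.1, -p.2), (-p.1, p.2), (-p.1, -p.2),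
   (p.2, p.1), (p.2, -p.1), (-p.2, p.1), (-p.2, -p.1)}

private lemma nbr_set_eq (p : ℤ × ℤ) (hp1 : 0 ≤ p.1) (hp2 : 0 ≤ p.2) (l : ℝ) (hl : 0 < l)
    (x : ℝ × ℝ) :
    {x' : ℝ × ℝ | isNbr p l x x'} =
      ↑(Finset.image (fun v : ℤ × ℤ => (x.1 + (v.1 : ℝ) * l, x.2 + (v.2 : ℝ) * l)) (VpZ p)) := by
  have h1 : (0:ℝ) ≤ (p.1 : ℝ) * l := mul_nonneg (by exact_mod_cast hp1) hl.le
  have h2 : (0:ℝ) ≤ (p.2 : ℝ) * l := mul_nonneg (by exact_mod_cast hp2) hl.le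
  ext x'
  simp only [Set.mem_setOf_eq, isNbr, abs_eq h1, abs_eq h2, Finset.coe_image, Set.mem_image,
    Finset.mem_coe, VpZ, Finset.mem_insert, Finset.mem_singleton, Prod.ext_iff]
  constructor
  · rintro (⟨h1 | h1, h2 | h2⟩ | ⟨h1 | h1, h2 | h2⟩)
    · exact ⟨(p.1, p.2), by simp, by push_cast; linarith, by push_cast; linarith⟩
    · exact ⟨(p.1, -p.2), by simp, by push_cast; linarith, by push_cast; linarith⟩
    · exact ⟨(-p.1, p.2), by simp, by push_cast; linarith, by push_cast; linarith⟩
    · exact ⟨(-p.1, -p.2), by simp, by push_cast; linarith, by push_cast; linarith⟩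
    · exact ⟨(p.2, p.1), by simp, by push_cast; linarith, by push_cast; linarith⟩
    · exact ⟨(p.2, -p.1), by simp, by push_cast; linarith, by push_cast; linarith⟩
    · exact ⟨(-p.2, p.1), by simp, by push_cast; linarith, by push_cast; linarith⟩
    · exact ⟨(-p.2, -p.1), by simp, by push_cast; linarith, by push_cast; linarith⟩
  · rintro ⟨v, (⟨a,b⟩|⟨a,b⟩|⟨a,b⟩|⟨a,b⟩|⟨a,b⟩|⟨a,b⟩|⟨a,b⟩|⟨a,b⟩), e1, e2⟩ <;>
      simp only [a, b] at e1 e2 <;> push_cast at e1 e2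
    · exact Or.inl ⟨Or.inl (by linarith), Or.inl (by linarith)⟩
    · exact Or.inl ⟨Or.inl (by linarith), Or.inr (by linarith)⟩
    · exact Or.inl ⟨Or.inr (by linarith), Or.inl (by linarith)⟩
    · exact Or.inl ⟨Or.inr (by linarith), Or.inr (by linarith)⟩
    · exact Or.inr ⟨Or.inl (by linarith), Or.inl (by linarith)⟩
    · exact Or.inr ⟨Or.inl (by linarith), Or.inr (by linarith)⟩
    · exact Or.inr ⟨Or.inr (by linarith), Or.inl (by linarith)⟩
    · exact Or.inr ⟨Or.inr (by linarith), Or.inr (by linarith)⟩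

private lemma finsum_nbr (p : ℤ × ℤ) (hp1 : 0 ≤ p.1) (hp2 : 0 ≤ p.2) (l : ℝ) (hl : 0 < l)
    (x : ℝ × ℝ) (g : ℝ × ℝ → ℝ) :
    ∑ᶠ x' ∈ {x' : ℝ × ℝ | isNbr p l x x'}, g x'
      = ∑ v ∈ VpZ p, g (x.1 + (v.1 : ℝ) * l, x.2 + (v.2 : ℝ) * l) := by
  rw [nbr_set_eq p hp1 hp2 l hl x, finsum_mem_coe_finset]
  apply Finset.sum_image
  intro a _ b _ h
  rw [Prod.ext_iff] at h
  obtain ⟨h1, h2⟩ := h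
  dsimp only at h1 h2
  have e1 : (a.1 : ℝ) = (b.1 : ℝ) := mul_right_cancel₀ hl.ne' (by linarith)
  have e2 : (a.2 : ℝ) = (b.2 : ℝ) := mul_right_cancel₀ hl.ne' (by linarith)
  exact Prod.ext (by exact_mod_cast e1) (by exact_mod_cast e2)

private lemma sum_VpZ (p : ℤ × ℤ) (hp1 : 0 ≤ p.1) (hp12 : p.1 ≤ p.2) (hp2 : p.2 ≠ 0) (A B : ℝ) :
    ∑ v ∈ VpZ p, ((v.1 : ℝ) * A + (v.2 : ℝ) * B) ^ 2
      = 4 * cP p * ((p.1 : ℝ) ^ 2 + (p.2 : ℝ) ^ 2) * (A ^ 2 + B ^ 2) := by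
  rcases eq_or_lt_of_le hp1 with h0 | h0pos
  · have h0 : p.1 = 0 := h0.symm
    have hV : VpZ p = {(0, p.2), (0, -p.2), (p.2, 0), (-p.2, 0)} := by
      ext v; simp [VpZ, h0, Prod.ext_iff]; try omega
    rw [hV, cP, if_neg (by omega), if_pos (Or.inl h0), h0]
    rw [Finset.sum_insert (by simp [Prod.ext_iff]; try omega),
      Finset.sum_insert (by simp [Prod.ext_iff]; try omega),
      Finset.sum_insert (by simp [Prod.ext_iff]; try omega), Finset.sum_singleton]
    push_cast
    ring
  · rcases eq_or_lt_of_le hp12 with heq | hlt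
    · have hV : VpZ p = {(p.1, p.1), (p.1, -p.1), (-p.1, p.1), (-p.1, -p.1)} := by
        ext v; simp [VpZ, ← heq, Prod.ext_iff]; try omega
      rw [hV, cP, if_neg (by omega), if_pos (Or.inr heq), ← heq]
      rw [Finset.sum_insert (by simp [Prod.ext_iff]; try omega),
        Finset.sum_insert (by simp [Prod.ext_iff]; try omega),
        Finset.sum_insert (by simp [Prod.ext_iff]; try omega), Finset.sum_singleton]
      push_cast
      ring
    · rw [cP, if_neg (by omega), if_neg (by omega), VpZ]
      rw [Finset.sum_insert (by simp [Prod.ext_iff]; try omega),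
        Finset.sum_insert (by simp [Prod.ext_iff]; try omega),
        Finset.sum_insert (by simp [Prod.ext_iff]; try omega),
        Finset.sum_insert (by simp [Prod.ext_iff]; try omega),
        Finset.sum_insert (by simp [Prod.ext_iff]; try omega),
        Finset.sum_insert (by simp [Prod.ext_iff]; try omega),
        Finset.sum_insert (by simp [Prod.ext_iff]; try omega), Finset.sum_singleton]
      push_cast
      ring

private lemma dsq_compact (x : ℝ × ℝ) (l : ℝ) : IsCompact (Dsq x l) :=
  (isCompact_Icc).prod isCompact_Icc

private lemma dsq_vol (x : ℝ × ℝ) (l : ℝ) (hl : 0 < l) : (volume (Dsq x l)).toReal = l ^ 2 := by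
  rw [Dsq, Measure.volume_eq_prod, Measure.prod_prod, Real.volume_Icc, Real.volume_Icc]
  rw [show x.1 + l/2 - (x.1 - l/2) = l by ring, show x.2 + l/2 - (x.2 - l/2) = l by ring]
  rw [← ENNReal.ofReal_mul hl.le, ENNReal.toReal_ofReal (by positivity)]
  ring

private lemma dsq_close (x : ℝ × ℝ) (l : ℝ) {ξ : ℝ × ℝ} (hξ : ξ ∈ Dsq x l) :
    dist ξ x ≤ l / 2 := by
  obtain ⟨⟨a, b⟩, c, d⟩ := hξ
  rw [Prod.dist_eq, Real.dist_eq, Real.dist_eq]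
  apply max_le <;> rw [abs_le] <;> constructor <;> simp at * <;> linarith

private lemma dsq_trans (x : ℝ × ℝ) (l : ℝ) (w : ℝ × ℝ) :
    (fun ξ : ℝ × ℝ => ξ + w) ⁻¹' Dsq (x + w) l = Dsq x l := by
  ext ξ
  simp only [Set.mem_preimage, Dsq, Set.mem_prod, Set.mem_Icc, Prod.fst_add, Prod.snd_add]
  constructor <;> rintro ⟨⟨a, b⟩, c, d⟩ <;>
    exact ⟨⟨by linarith, by linarith⟩, by linarith, by linarith⟩

private lemma avg_lim (Ω : Set (ℝ × ℝ)) (hΩ : IsOpen Ω) (f : ℝ × ℝ → ℝ)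
    (hf : ContDiffOn ℝ 1 f Ω) (x : ℝ × ℝ) (hx : x ∈ Ω) (v : ℝ × ℝ) :
    Filter.Tendsto (fun l => (Iavg f (x.1 + v.1 * l, x.2 + v.2 * l) l - Iavg f x l) / l)
      (𝓝[>] (0:ℝ)) (𝓝 (v.1 * pd1 f x + v.2 * pd2 f x)) := by
  set φ := fderiv ℝ f x with hφdef
  have hφ : HasStrictFDerivAt f φ x :=
    (hf.contDiffAt (hΩ.mem_nhds hx)).hasStrictFDerivAt one_ne_zero
  have hc : φ v = v.1 * pd1 f x + v.2 * pd2 f x := by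
    have hv : v = v.1 • ((1:ℝ), (0:ℝ)) + v.2 • ((0:ℝ), (1:ℝ)) := by ext <;> simp
    calc φ v = φ (v.1 • ((1:ℝ), (0:ℝ)) + v.2 • ((0:ℝ), (1:ℝ))) := by rw [← hv]
    _ = v.1 * φ (1, 0) + v.2 * φ (0, 1) := by
        rw [map_add, φ.map_smul, φ.map_smul]; simp [smul_eq_mul]
    _ = v.1 * pd1 f x + v.2 * pd2 f x := rfl
  rw [show v.1 * pd1 f x + v.2 * pd2 f x = φ v from hc.symm]
  have hfc : ContinuousOn f Ω := hf.continuousOn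
  obtain ⟨δ₀, hδ₀pos, hδ₀⟩ : ∃ δ > 0, Metric.closedBall x δ ⊆ Ω :=
    (Metric.nhds_basis_closedBall.mem_iff).1 (hΩ.mem_nhds hx)
  rw [Metric.tendsto_nhdsWithin_nhds]
  intro ε hε
  have hn1 : (0:ℝ) < ‖v‖ + 1 := by positivity
  set ε' := ε / (2 * (‖v‖ + 1)) with hε'def
  have hε' : 0 < ε' := by positivity
  obtain ⟨δ₁, hδ₁pos, H⟩ := Metric.eventually_nhds_iff.1 (hφ.isLittleO.def hε')
  refine ⟨min δ₀ δ₁ / (2 * (‖v‖ + 1)), by positivity, ?_⟩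
  intro l hl hld
  rw [Real.dist_eq, sub_zero] at hld
  replace hl : 0 < l := hl
  rw [abs_of_pos hl] at hld
  set w : ℝ × ℝ := (v.1 * l, v.2 * l) with hwdef
  have hwnorm : ‖w‖ ≤ ‖v‖ * l := by
    rw [Prod.norm_def]
    apply max_le
    · calc ‖w.1‖ = ‖v.1‖ * l := by
            rw [hwdef]; simp [Real.norm_eq_abs, abs_mul, abs_of_pos hl]
      _ ≤ ‖v‖ * l := by have := norm_fst_le v; nlinarith [norm_nonneg v.1]
    · calc ‖w.2‖ = ‖v.2‖ * l := by
            rw [hwdef]; simp [Real.norm_eq_abs, abs_mul, abs_of_pos hl]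
      _ ≤ ‖v‖ * l := by have := norm_snd_le v; nlinarith [norm_nonneg v.2]
  have hlsmall : l * (1 + ‖v‖) < min δ₀ δ₁ := by
    have h2 : l * (2 * (‖v‖ + 1)) < min δ₀ δ₁ := by
      rw [lt_div_iff₀ (by positivity)] at hld; linarith
    nlinarith [hl.le, norm_nonneg v]
  have hmin₀ : min δ₀ δ₁ ≤ δ₀ := min_le_left _ _
  have hmin₁ : min δ₀ δ₁ ≤ δ₁ := min_le_right _ _
  have hclose' : ∀ ξ ∈ Dsq x l, dist (ξ + w) x ≤ l / 2 + ‖v‖ * l := by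
    intro ξ hξ
    calc dist (ξ + w) x ≤ dist (ξ + w) ξ + dist ξ x := dist_triangle _ _ _
    _ ≤ ‖v‖ * l + l / 2 := by
        rw [dist_eq_norm, add_sub_cancel_left]
        exact add_le_add hwnorm (dsq_close x l hξ)
    _ = l / 2 + ‖v‖ * l := by ring
  have hsub : Dsq x l ⊆ Ω := by
    intro ξ hξ
    apply hδ₀
    have := dsq_close x l hξ
    exact Metric.mem_closedBall.2 (by nlinarith [norm_nonneg v])
  have hsubw : ∀ ξ ∈ Dsq x l, ξ + w ∈ Ω := by
    intro ξ hξ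
    apply hδ₀
    have := hclose' ξ hξ
    exact Metric.mem_closedBall.2 (by nlinarith [norm_nonneg v])
  have hx' : ((x.1 + v.1 * l, x.2 + v.2 * l) : ℝ × ℝ) = x + w := by
    rw [hwdef]; ext <;> simp
  have htrans : ∫ ξ in Dsq (x + w) l, f ξ = ∫ ξ in Dsq x l, f (ξ + w) := by
    rw [← dsq_trans x l w]
    exact ((measurePreserving_add_right volume w).setIntegral_preimage_emb
      (measurableEmbedding_addRight w) f (Dsq (x + w) l)).symm
  have hK := dsq_compact x l
  have hI1 : IntegrableOn f (Dsq x l) := (hfc.mono hsub).integrableOn_compact hK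
  have hI2 : IntegrableOn (fun ξ => f (ξ + w)) (Dsq x l) := by
    refine (ContinuousOn.integrableOn_compact hK ?_)
    exact hfc.comp ((continuous_add_right w).continuousOn) hsubw
  have hb : ∀ ξ ∈ Dsq x l, ‖f (ξ + w) - f ξ - φ w‖ ≤ ε' * ‖w‖ := by
    intro ξ hξ
    have hq : dist ((ξ + w, ξ) : (ℝ × ℝ) × (ℝ × ℝ)) (x, x) < δ₁ := by
      rw [Prod.dist_eq]
      apply max_lt
      · exact lt_of_le_of_lt (hclose' ξ hξ) (by nlinarith [norm_nonneg v])
      · exact lt_of_le_of_lt (dsq_close x l hξ) (by nlinarith [norm_nonneg v])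
    have := H hq
    simpa [add_sub_cancel_left] using this
  have hInt : IntegrableOn (fun ξ => f (ξ + w) - f ξ - φ w) (Dsq x l) :=
    (hI2.sub hI1).sub (integrableOn_const hK.measure_lt_top.ne)
  have hest : ‖∫ ξ in Dsq x l, (f (ξ + w) - f ξ - φ w)‖ ≤ (ε' * ‖w‖) * l ^ 2 := by
    have := norm_setIntegral_le_of_norm_le_const (μ := volume) (s := Dsq x l)
      (C := ε' * ‖w‖) (hK.measure_lt_top) hb
    rwa [measureReal_def, dsq_vol x l hl] at this
  have hsplit : ∫ ξ in Dsq x l, (f (ξ + w) - f ξ - φ w)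
      = (∫ ξ in Dsq x l, f (ξ + w)) - (∫ ξ in Dsq x l, f ξ) - l ^ 2 * φ w := by
    have e1 : ∫ ξ in Dsq x l, (f (ξ + w) - f ξ - φ w)
        = (∫ ξ in Dsq x l, (f (ξ + w) - f ξ)) - ∫ _ξ in Dsq x l, (φ w : ℝ) :=
      integral_sub (hI2.sub hI1) (integrableOn_const hK.measure_lt_top.ne)
    have e2 : ∫ ξ in Dsq x l, (f (ξ + w) - f ξ)
        = (∫ ξ in Dsq x l, f (ξ + w)) - ∫ ξ in Dsq x l, f ξ := integral_sub hI2 hI1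
    rw [e1, e2, setIntegral_const, measureReal_def, dsq_vol x l hl, smul_eq_mul]
  have hφw : φ w = l * φ v := by
    have hwv : w = l • v := by rw [hwdef]; ext <;> simp [mul_comm]
    rw [hwv, φ.map_smul]; simp [smul_eq_mul]
  have hl2 : (l:ℝ) ^ 2 ≠ 0 := by positivity
  have key : (Iavg f (x.1 + v.1 * l, x.2 + v.2 * l) l - Iavg f x l) / l - φ v
      = (∫ ξ in Dsq x l, (f (ξ + w) - f ξ - φ w)) / l ^ 3 := by
    rw [hsplit, hφw, Iavg, Iavg, hx', htrans]
    field_simp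
  rw [Real.dist_eq, key]
  have hl3 : (0:ℝ) < l ^ 3 := by positivity
  rw [abs_div, abs_of_pos hl3, div_lt_iff₀ hl3]
  calc |∫ ξ in Dsq x l, (f (ξ + w) - f ξ - φ w)| ≤ (ε' * ‖w‖) * l ^ 2 := hest
  _ ≤ (ε' * (‖v‖ * l)) * l ^ 2 := by gcongr
  _ = (ε / (2 * (‖v‖ + 1))) * (l ^ 3 * ‖v‖) := by rw [hε'def]; ring
  _ < (ε / (2 * (‖v‖ + 1))) * (l ^ 3 * (2 * (‖v‖ + 1))) := by
      apply mul_lt_mul_of_pos_left _ (by positivity)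
      apply mul_lt_mul_of_pos_left _ hl3
      linarith [norm_nonneg v]
  _ = ε * l ^ 3 := by field_simp

/-- recovering `|∇f(x)|²` from averages (Lemma 3.1). -/
theorem stmt13 (P : Finset (ℤ × ℤ))
    (hP : ∀ p ∈ P, 0 ≤ p.1 ∧ p.1 ≤ p.2 ∧ p.2 ≠ 0)
    (A : ℤ × ℤ → ℝ) (hA : 8 * ∑ p ∈ P, cP p * A p = 1)
    (hA2 : ∑ p ∈ P, ((p.1 : ℝ) ^ 2 + (p.2 : ℝ) ^ 2) * cP p * A p ≠ 0)
    (Ω : Set (ℝ × ℝ)) (hΩ : IsOpen Ω) (f : ℝ × ℝ → ℝ) (hf : ContDiffOn ℝ 1 f Ω)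
    (x : ℝ × ℝ) (hx : x ∈ Ω) :
    Filter.Tendsto
      (fun l : ℝ =>
        (1 / 2) * ((1 / 2) * (∑ p ∈ P, ((p.1 : ℝ) ^ 2 + (p.2 : ℝ) ^ 2) * cP p * A p)⁻¹) *
          ((1 / l ^ 2) * ∑ p ∈ P, A p *
            ∑ᶠ x' ∈ {x' : ℝ × ℝ | isNbr p l x x'}, (Iavg f x' l - Iavg f x l) ^ 2))
      (𝓝[>] (0 : ℝ))
      (𝓝 ((pd1 f x) ^ 2 + (pd2 f x) ^ 2)) := by
  classical
  set S := ∑ p ∈ P, ((p.1 : ℝ) ^ 2 + (p.2 : ℝ) ^ 2) * cP p * A p with hSdef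
  set A1 := pd1 f x with hA1def
  set B1 := pd2 f x with hB1def
  have hlim : Filter.Tendsto
      (fun l : ℝ => (1 / 2) * ((1 / 2) * S⁻¹) * ∑ p ∈ P, A p *
        ∑ v ∈ VpZ p, ((Iavg f (x.1 + (v.1 : ℝ) * l, x.2 + (v.2 : ℝ) * l) l - Iavg f x l) / l) ^ 2)
      (𝓝[>] (0 : ℝ))
      (𝓝 ((1 / 2) * ((1 / 2) * S⁻¹) * ∑ p ∈ P, A p *
        ∑ v ∈ VpZ p, ((v.1 : ℝ) * A1 + (v.2 : ℝ) * B1) ^ 2)) := by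
    apply Filter.Tendsto.const_mul
    apply tendsto_finset_sum
    intro p _
    apply Filter.Tendsto.const_mul
    apply tendsto_finset_sum
    intro v _
    exact (avg_lim Ω hΩ f hf x hx ((v.1 : ℝ), (v.2 : ℝ))).pow 2
  have hval : (1 / 2 : ℝ) * ((1 / 2) * S⁻¹) * ∑ p ∈ P, A p *
      ∑ v ∈ VpZ p, ((v.1 : ℝ) * A1 + (v.2 : ℝ) * B1) ^ 2 = A1 ^ 2 + B1 ^ 2 := by
    have hsum : ∑ p ∈ P, A p * ∑ v ∈ VpZ p, ((v.1 : ℝ) * A1 + (v.2 : ℝ) * B1) ^ 2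
        = 4 * (A1 ^ 2 + B1 ^ 2) * S := by
      rw [hSdef, Finset.mul_sum]
      apply Finset.sum_congr rfl
      intro p hp
      obtain ⟨h1, h2, h3⟩ := hP p hp
      rw [sum_VpZ p h1 h2 h3 A1 B1]
      ring
    rw [hsum]
    field_simp
    ring
  rw [← hval]
  apply hlim.congr'
  filter_upwards [self_mem_nhdsWithin] with l hl
  replace hl : 0 < l := hl
  have hfin : ∀ p ∈ P,
      ∑ᶠ x' ∈ {x' : ℝ × ℝ | isNbr p l x x'}, (Iavg f x' l - Iavg f x l) ^ 2
        = ∑ v ∈ VpZ p, (Iavg f (x.1 + (v.1 : ℝ) * l, x.2 + (v.2 : ℝ) * l) l - Iavg f x l) ^ 2 := by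
    intro p hp
    obtain ⟨h1, h2, h3⟩ := hP p hp
    exact finsum_nbr p h1 (le_trans h1 h2) l hl x
      (fun x' => (Iavg f x' l - Iavg f x l) ^ 2)
  have hswap : ((1 : ℝ) / l ^ 2) * (∑ p ∈ P, A p *
      ∑ᶠ x' ∈ {x' : ℝ × ℝ | isNbr p l x x'}, (Iavg f x' l - Iavg f x l) ^ 2)
      = ∑ p ∈ P, A p * ∑ v ∈ VpZ p,
        ((Iavg f (x.1 + (v.1 : ℝ) * l, x.2 + (v.2 : ℝ) * l) l - Iavg f x l) / l) ^ 2 := by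
    rw [Finset.mul_sum]
    apply Finset.sum_congr rfl
    intro p hp
    rw [hfin p hp]
    simp only [Finset.mul_sum, div_pow]
    apply Finset.sum_congr rfl
    intro v _
    ring
  simp only [Set.mem_setOf_eq] at hswap
  rw [← hswap]
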